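/- The vector π defined by π_k = e^{−2εk} for k = 0,…,N−1 satisfies T π = π; that is, the optimal asymptotic cooling state is a fixed point (eigenvector with eigenvalue 1) of the TSAC transition matrix. -/

import Mathlib

open Real Matrix Finset

noncomputable def Tmat (n : ℕ) (ε : ℝ) : Matrix (Fin (2 ^ n)) (Fin (2 ^ n)) ℝ :=
  fun i j =>
    if (i : ℕ) = 0 then
      if (j : ℕ) ≤ 1 then Real.exp ε / (Real.exp ε + Real.exp (-ε)) else 0
    else if (i : ℕ) = 2 ^ n - 1 then
      if 2 ^ n - 2 ≤ (j : ℕ) then Real.exp (-ε) / (Real.exp ε + Real.exp (-ε)) else 0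
    else if (j : ℕ) + 1 = (i : ℕ) then Real.exp (-ε) / (Real.exp ε + Real.exp (-ε))
    else if (j : ℕ) = (i : ℕ) + 1 then Real.exp ε / (Real.exp ε + Real.exp (-ε))
    else 0

lemma two_terms {N : ℕ} (f : Fin N → ℝ) (a b : Fin N) (hab : a ≠ b)
    (h : ∀ c : Fin N, c ≠ a → c ≠ b → f c = 0) :
    ∑ c, f c = f a + f b := by
  rw [← Finset.sum_pair hab]
  refine (Finset.sum_subset (Finset.subset_univ _) ?_).symm
  intro c _ hc
  simp only [Finset.mem_insert, Finset.mem_singleton, not_or] at hc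
  exact h c hc.1 hc.2

theorem tsac_oas_fixed_point (n : ℕ) (hn : 1 ≤ n) (ε : ℝ) (hε : 0 < ε) :
    (Tmat n ε).mulVec (fun k : Fin (2 ^ n) => Real.exp (-2 * ε * (k : ℕ))) =
      fun k : Fin (2 ^ n) => Real.exp (-2 * ε * (k : ℕ)) := by
  have hN : 2 ≤ 2 ^ n := by
    calc 2 = 2 ^ 1 := rfl
    _ ≤ 2 ^ n := Nat.pow_le_pow_right (by norm_num) hn
  have hzpos : (0:ℝ) < Real.exp ε + Real.exp (-ε) := by positivity
  have hzne : (Real.exp ε + Real.exp (-ε)) ≠ 0 := ne_of_gt hzpos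
  have hab : Real.exp ε * Real.exp (-ε) = 1 := by
    rw [← Real.exp_add]; simp
  funext i
  simp only [Matrix.mulVec, dotProduct]
  rcases eq_or_ne (i : ℕ) 0 with h0 | h0
  · have hlt0 : 0 < 2 ^ n := by omega
    have hlt1 : 1 < 2 ^ n := by omega
    have e0 : ((⟨0, hlt0⟩ : Fin (2^n)) : ℕ) = 0 := rfl
    have e1 : ((⟨1, hlt1⟩ : Fin (2^n)) : ℕ) = 1 := rfl
    rw [two_terms _ (⟨0, hlt0⟩ : Fin (2^n)) ⟨1, hlt1⟩
      (Fin.ne_of_val_ne (show (0:ℕ) ≠ 1 by omega)) (fun c hc0 hc1 => ?_)]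
    · have E0 : Tmat n ε i ⟨0, hlt0⟩ = Real.exp ε / (Real.exp ε + Real.exp (-ε)) := by
        simp only [Tmat, e0]
        split_ifs <;> first | rfl | (exfalso; omega)
      have E1 : Tmat n ε i ⟨1, hlt1⟩ = Real.exp ε / (Real.exp ε + Real.exp (-ε)) := by
        simp only [Tmat, e1]
        split_ifs <;> first | rfl | (exfalso; omega)
      rw [E0, E1, e0, e1, h0]
      rw [Nat.cast_zero, Nat.cast_one,
        show -2*ε*(0:ℝ) = 0 by ring, Real.exp_zero,
        show -2*ε*(1:ℝ) = -ε + -ε by ring, Real.exp_add]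
      field_simp
      linear_combination Real.exp (-ε) * hab
    · have h0c : (c : ℕ) ≠ 0 := fun h => hc0 (Fin.ext h)
      have h1c : (c : ℕ) ≠ 1 := fun h => hc1 (Fin.ext h)
      simp only [Tmat]
      split_ifs <;> first | ring1 | (exfalso; omega)
  rcases eq_or_ne ((i : ℕ)) (2 ^ n - 1) with h1 | h1
  · have hlt2 : 2 ^ n - 2 < 2 ^ n := by omega
    have hlt1 : 2 ^ n - 1 < 2 ^ n := by omega
    have e0 : ((⟨2 ^ n - 2, hlt2⟩ : Fin (2^n)) : ℕ) = 2 ^ n - 2 := rfl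
    have e1 : ((⟨2 ^ n - 1, hlt1⟩ : Fin (2^n)) : ℕ) = 2 ^ n - 1 := rfl
    rw [two_terms _ (⟨2 ^ n - 2, hlt2⟩ : Fin (2^n)) ⟨2 ^ n - 1, hlt1⟩
      (Fin.ne_of_val_ne (show 2 ^ n - 2 ≠ 2 ^ n - 1 by omega)) (fun c hc0 hc1 => ?_)]
    · have E0 : Tmat n ε i ⟨2 ^ n - 2, hlt2⟩
          = Real.exp (-ε) / (Real.exp ε + Real.exp (-ε)) := by
        simp only [Tmat, e0]
        split_ifs <;> first | rfl | (exfalso; omega)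
      have E1 : Tmat n ε i ⟨2 ^ n - 1, hlt1⟩
          = Real.exp (-ε) / (Real.exp ε + Real.exp (-ε)) := by
        simp only [Tmat, e1]
        split_ifs <;> first | rfl | (exfalso; omega)
      rw [E0, E1, e0, e1, h1]
      have hcast : ((2 ^ n - 1 : ℕ) : ℝ) = ((2 ^ n - 2 : ℕ) : ℝ) + 1 := by
        have h : (2 ^ n - 1 : ℕ) = (2 ^ n - 2) + 1 := by omega
        rw [h]; push_cast; ring
      rw [hcast]
      have he2 : Real.exp (-2 * ε * (((2 ^ n - 2 : ℕ) : ℝ) + 1))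
          = Real.exp (-2 * ε * ((2 ^ n - 2 : ℕ) : ℝ)) * (Real.exp (-ε) * Real.exp (-ε)) := by
        rw [← Real.exp_add, ← Real.exp_add]; ring_nf
      rw [he2]
      generalize Real.exp (-2 * ε * ((2 ^ n - 2 : ℕ) : ℝ)) = p
      field_simp
      linear_combination (-p) * hab
    · have h0c : (c : ℕ) ≠ 2 ^ n - 2 := fun h => hc0 (Fin.ext h)
      have h1c : (c : ℕ) ≠ 2 ^ n - 1 := fun h => hc1 (Fin.ext h)
      have hlt := c.isLt
      simp only [Tmat]
      split_ifs <;> first | ring1 | (exfalso; omega)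
  · have hi := i.isLt
    have hlo : (i : ℕ) - 1 < 2 ^ n := by omega
    have hhi : (i : ℕ) + 1 < 2 ^ n := by omega
    have e0 : ((⟨(i : ℕ) - 1, hlo⟩ : Fin (2^n)) : ℕ) = (i : ℕ) - 1 := rfl
    have e1 : ((⟨(i : ℕ) + 1, hhi⟩ : Fin (2^n)) : ℕ) = (i : ℕ) + 1 := rfl
    rw [two_terms _ (⟨(i : ℕ) - 1, hlo⟩ : Fin (2^n)) ⟨(i : ℕ) + 1, hhi⟩
      (Fin.ne_of_val_ne (show (i : ℕ) - 1 ≠ (i : ℕ) + 1 by omega)) (fun c hc0 hc1 => ?_)]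
    · have E0 : Tmat n ε i ⟨(i : ℕ) - 1, hlo⟩
          = Real.exp (-ε) / (Real.exp ε + Real.exp (-ε)) := by
        simp only [Tmat, e0]
        split_ifs <;> first | rfl | (exfalso; omega)
      have E1 : Tmat n ε i ⟨(i : ℕ) + 1, hhi⟩
          = Real.exp ε / (Real.exp ε + Real.exp (-ε)) := by
        simp only [Tmat, e1]
        split_ifs <;> first | rfl | (exfalso; omega)
      rw [E0, E1, e0, e1]
      have hc1 : (((i : ℕ) - 1 : ℕ) : ℝ) = ((i : ℕ) : ℝ) - 1 := by
        have h : ((i : ℕ) - 1 : ℕ) + 1 = (i : ℕ) := by omega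
        have h2 := congrArg (fun m : ℕ => (m : ℝ)) h
        push_cast at h2
        linarith
      have elo : Real.exp (-2 * ε * (((i:ℕ) - 1 : ℕ) : ℝ))
          = Real.exp (-2 * ε * ((i:ℕ) : ℝ)) * (Real.exp ε * Real.exp ε) := by
        rw [hc1, ← Real.exp_add, ← Real.exp_add]; ring_nf
      have ehi : Real.exp (-2 * ε * (((i:ℕ) + 1 : ℕ) : ℝ))
          = Real.exp (-2 * ε * ((i:ℕ) : ℝ)) * (Real.exp (-ε) * Real.exp (-ε)) := by
        push_cast
        rw [← Real.exp_add, ← Real.exp_add]; ring_nf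
      rw [elo, ehi]
      generalize Real.exp (-2 * ε * ((i:ℕ) : ℝ)) = p
      field_simp
      linear_combination p * hab
    · have h0c : (c : ℕ) ≠ (i : ℕ) - 1 := fun h => hc0 (Fin.ext h)
      have h1c : (c : ℕ) ≠ (i : ℕ) + 1 := fun h => hc1 (Fin.ext h)
      simp only [Tmat]
      split_ifs <;> first | ring1 | (exfalso; omega)
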